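/- The Laplace transform of a function whose Laplace transform equals Γ(ν)/(p^ν + c^ν) is realized by N(t) = N₀ Γ(ν) t^(ν−1) E_{ν,ν}(−c^ν t^ν): namely ∫₀^∞ e^(−pt) t^(ν−1) E_{ν,ν}(−c^ν t^ν) dt = 1/(p^ν + c^ν) for p > c. -/

import Mathlib

open MeasureTheory Real Set

lemma aux_integrableOn_rpow_mul_exp {s r : ℝ} (hs : 0 < s) (hr : 0 < r) :
    IntegrableOn (fun t : ℝ => t ^ (s - 1) * Real.exp (-(r * t))) (Ioi 0) := by
  have h0 : IntegrableOn (fun x : ℝ => Real.exp (-x) * x ^ (s - 1)) (Ioi 0) :=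
    Real.GammaIntegral_convergent hs
  have h1 : IntegrableOn (fun x : ℝ => Real.exp (-(r * x)) * (r * x) ^ (s - 1)) (Ioi 0) := by
    have := (integrableOn_Ioi_comp_mul_left_iff
      (fun x : ℝ => Real.exp (-x) * x ^ (s - 1)) 0 hr)
    rw [mul_zero] at this
    exact this.2 h0
  have h2 : IntegrableOn
      (fun x : ℝ => (r ^ (s - 1))⁻¹ * (Real.exp (-(r * x)) * (r * x) ^ (s - 1))) (Ioi 0) :=
    h1.const_mul _
  refine h2.congr_fun (fun x hx => ?_) measurableSet_Ioi
  have hx0 : (0 : ℝ) < x := hx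
  dsimp only
  rw [Real.mul_rpow hr.le hx0.le]
  have hrs : r ^ (s - 1) ≠ 0 := (Real.rpow_pos_of_pos hr _).ne'
  field_simp

theorem F_function_laplace_transform
    (c ν p : ℝ) (hc : 0 < c) (hν : 0 < ν) (hp : c < p) :
    ∫ t in Ioi (0 : ℝ),
        Real.exp (-p * t) *
          (t ^ (ν - 1) * ∑' k : ℕ, (-(c ^ ν * t ^ ν)) ^ k / Real.Gamma (ν + k * ν))
      = 1 / (p ^ ν + c ^ ν) := by
  have hp0 : 0 < p := hc.trans hp
  have hpν : 0 < p ^ ν := Real.rpow_pos_of_pos hp0 ν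
  have hcν : 0 < c ^ ν := Real.rpow_pos_of_pos hc ν
  have hlt : c ^ ν < p ^ ν := Real.rpow_lt_rpow hc.le hp hν
  set A : ℝ := c ^ ν with hA
  set F : ℕ → ℝ → ℝ := fun k t =>
    Real.exp (-p * t) * (t ^ (ν - 1) * ((-(A * t ^ ν)) ^ k / Real.Gamma (ν + k * ν))) with hF
  have hs : ∀ k : ℕ, 0 < ν + (k : ℝ) * ν := fun k => by positivity
  have hGpos : ∀ k : ℕ, 0 < Real.Gamma (ν + (k : ℝ) * ν) :=
    fun k => Real.Gamma_pos_of_pos (hs k)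
  -- pointwise rewriting of F on Ioi 0
  have hFeq : ∀ k : ℕ, ∀ t ∈ Ioi (0 : ℝ),
      F k t = ((-A) ^ k / Real.Gamma (ν + (k : ℝ) * ν)) *
        (t ^ (ν + (k : ℝ) * ν - 1) * Real.exp (-(p * t))) := by
    intro k t ht
    have ht0 : (0 : ℝ) < t := ht
    have h1 : t ^ ((k : ℝ) * ν) = (t ^ ν) ^ k := by
      rw [mul_comm ((k : ℝ)) ν, Real.rpow_mul ht0.le, Real.rpow_natCast]
    have h2 : (-(A * t ^ ν)) ^ k = (-A) ^ k * t ^ ((k : ℝ) * ν) := by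
      rw [h1, neg_mul_eq_neg_mul, mul_pow]
    have h3 : t ^ (ν + (k : ℝ) * ν - 1) = t ^ (ν - 1) * t ^ ((k : ℝ) * ν) := by
      rw [← Real.rpow_add ht0]; ring_nf
    rw [hF]
    simp only
    rw [h2, h3, neg_mul p t]
    ring
  -- integrability of each term
  have hInt : ∀ k : ℕ, IntegrableOn (F k) (Ioi 0) := by
    intro k
    have h2 : IntegrableOn (fun t : ℝ => ((-A) ^ k / Real.Gamma (ν + (k : ℝ) * ν)) *
        (t ^ (ν + (k : ℝ) * ν - 1) * Real.exp (-(p * t)))) (Ioi 0) :=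
      (aux_integrableOn_rpow_mul_exp (hs k) hp0).const_mul _
    exact h2.congr_fun (fun t ht => (hFeq k t ht).symm) measurableSet_Ioi
  -- value of the integral of each term
  have hval : ∀ k : ℕ, ∫ t in Ioi (0 : ℝ), F k t
      = ((-A) ^ k / Real.Gamma (ν + (k : ℝ) * ν)) *
        ((1 / p) ^ (ν + (k : ℝ) * ν) * Real.Gamma (ν + (k : ℝ) * ν)) := by
    intro k
    rw [setIntegral_congr_fun measurableSet_Ioi (hFeq k), integral_const_mul,
      integral_rpow_mul_exp_neg_mul_Ioi (hs k) hp0]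
  have hval' : ∀ k : ℕ, ∫ t in Ioi (0 : ℝ), F k t
      = (1 / p ^ ν) * (-(A / p ^ ν)) ^ k := by
    intro k
    rw [hval k]
    have hG := (hGpos k).ne'
    have e1 : (1 / p : ℝ) ^ (ν + (k : ℝ) * ν) = (1 / p ^ ν) * (1 / p ^ ν) ^ k := by
      rw [Real.rpow_add (by positivity), mul_comm ((k : ℝ)) ν, Real.rpow_mul (by positivity),
        Real.rpow_natCast, one_div, Real.inv_rpow hp0.le]
      simp [one_div]
    rw [e1]
    field_simp
    try ring
  -- norm integral values and summability
  have hnorm : ∀ k : ℕ, (∫ t in Ioi (0 : ℝ), ‖F k t‖)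
      = (1 / p ^ ν) * (A / p ^ ν) ^ k := by
    intro k
    have : ∀ t ∈ Ioi (0 : ℝ), ‖F k t‖
        = (A ^ k / Real.Gamma (ν + (k : ℝ) * ν)) *
          (t ^ (ν + (k : ℝ) * ν - 1) * Real.exp (-(p * t))) := by
      intro t ht
      have ht0 : (0 : ℝ) < t := ht
      rw [hFeq k t ht, Real.norm_eq_abs, abs_mul, abs_mul, abs_div, abs_pow, abs_neg,
        abs_of_pos hcν, abs_of_pos (hGpos k), abs_of_pos (Real.rpow_pos_of_pos ht0 _),
        abs_of_pos (Real.exp_pos _)]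
    rw [setIntegral_congr_fun measurableSet_Ioi this, integral_const_mul,
      integral_rpow_mul_exp_neg_mul_Ioi (hs k) hp0]
    have hG := (hGpos k).ne'
    have e1 : (1 / p : ℝ) ^ (ν + (k : ℝ) * ν) = (1 / p ^ ν) * (1 / p ^ ν) ^ k := by
      rw [Real.rpow_add (by positivity), mul_comm ((k : ℝ)) ν, Real.rpow_mul (by positivity),
        Real.rpow_natCast, one_div, Real.inv_rpow hp0.le]
      simp [one_div]
    rw [e1]
    field_simp
    try ring
  have hr1 : A / p ^ ν < 1 := (div_lt_one hpν).2 hlt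
  have hr0 : 0 ≤ A / p ^ ν := by positivity
  have hsum : Summable fun k : ℕ => ∫ t in Ioi (0 : ℝ), ‖F k t‖ := by
    simp_rw [hnorm]
    exact (summable_geometric_of_lt_one hr0 hr1).mul_left _
  -- swap sum and integral
  have hswap := integral_tsum_of_summable_integral_norm hInt hsum
  have hintgr : ∀ t : ℝ, Real.exp (-p * t) *
      (t ^ (ν - 1) * ∑' k : ℕ, (-(A * t ^ ν)) ^ k / Real.Gamma (ν + k * ν))
      = ∑' k : ℕ, F k t := by
    intro t
    rw [hF]
    simp only
    rw [tsum_mul_left, tsum_mul_left]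
  calc ∫ t in Ioi (0 : ℝ), Real.exp (-p * t) *
          (t ^ (ν - 1) * ∑' k : ℕ, (-(A * t ^ ν)) ^ k / Real.Gamma (ν + k * ν))
      = ∫ t in Ioi (0 : ℝ), ∑' k : ℕ, F k t := by
        exact integral_congr_ae (Filter.Eventually.of_forall (fun t => hintgr t))
    _ = ∑' k : ℕ, ∫ t in Ioi (0 : ℝ), F k t := hswap.symm
    _ = ∑' k : ℕ, (1 / p ^ ν) * (-(A / p ^ ν)) ^ k := by simp_rw [hval']
    _ = (1 / p ^ ν) * (1 - (-(A / p ^ ν)))⁻¹ := by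
        rw [tsum_mul_left, tsum_geometric_of_norm_lt_one (by
          rw [norm_neg, Real.norm_eq_abs, abs_of_nonneg hr0]; exact hr1)]
    _ = 1 / (p ^ ν + A) := by
        rw [sub_neg_eq_add]
        field_simp
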